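/- Let Γ be a weighted forest and (P,Q) an edge of Γ. Then d(Γ) = d(Γ_{PQ}) - d(Γ_{P,Q}), where Γ_{PQ} is Γ with only the edge (P,Q) removed, and Γ_{P,Q} is Γ with both vertices P and Q removed. -/

import Mathlib

open Classical Finset

/-- The matrix `Q(Γ)` of a weighted graph: `-a i` on the diagonal, `-1` for
adjacent vertices, `0` otherwise. -/
noncomputable def wMatrix {V : Type*} [Fintype V] (G : SimpleGraph V) (a : V → ℤ) :
    Matrix V V ℤ :=
  Matrix.of fun i j => if i = j then -a i else if G.Adj i j then (-1 : ℤ) else 0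

/-- The determinant `d(Γ)` of a weighted graph. -/
noncomputable def wDet {V : Type*} [Fintype V] (G : SimpleGraph V) (a : V → ℤ) : ℤ :=
  (wMatrix G a).det

/-- The determinant of the weighted graph obtained by deleting a set `s` of
vertices (and all incident edges). -/
noncomputable def wDetDel {V : Type*} [Fintype V] (G : SimpleGraph V) (a : V → ℤ)
    (s : Set V) : ℤ :=
  wDet (SimpleGraph.comap (Subtype.val : {v // v ∉ s} → V) G) (fun v => a v.1)

private lemma orbit_walk {V : Type*} (G : SimpleGraph V) (σ : Equiv.Perm V)
    (hadj : ∀ i, σ i ≠ i → G.Adj i (σ i)) (x : V) (hx : σ x ≠ x) :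
    ∀ m : ℕ, ∃ w : G.Walk x (σ^[m] x),
      w.support = (List.range (m+1)).map (fun j => σ^[j] x) ∧
      w.edges = (List.range m).map (fun j => s(σ^[j] x, σ^[j+1] x)) := by
  intro m
  induction m with
  | zero => exact ⟨SimpleGraph.Walk.nil, by simp [List.range_succ], by simp⟩
  | succ m ih =>
    obtain ⟨w, hs, he⟩ := ih
    have h1 : σ (σ^[m] x) = σ^[m+1] x := (Function.iterate_succ_apply' σ m x).symm
    have hne : σ (σ^[m] x) ≠ σ^[m] x := by
      intro h
      apply hx
      have h2 : σ^[m] (σ x) = σ^[m] x := by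
        rw [← Function.iterate_succ_apply, Function.iterate_succ_apply', h]
      exact (σ.injective.iterate m) h2
    have hadj' : G.Adj (σ^[m] x) (σ^[m+1] x) := h1 ▸ hadj _ hne
    refine ⟨w.concat hadj', ?_, ?_⟩
    · rw [SimpleGraph.Walk.support_concat, hs, List.range_succ]
      simp [pow_succ, Equiv.Perm.mul_apply, List.range_succ]
    · rw [SimpleGraph.Walk.edges_concat, he, List.range_succ]
      simp [pow_succ, Equiv.Perm.mul_apply]

private lemma key_invol {V : Type*} [Fintype V] (G : SimpleGraph V) (hG : G.IsAcyclic)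
    (σ : Equiv.Perm V) (hadj : ∀ i, σ i ≠ i → G.Adj i (σ i)) (i : V) :
    σ (σ i) = i := by
  by_contra h2
  have hi : σ i ≠ i := fun h => h2 (by rw [h, h])
  obtain ⟨n, hnpos, hperiod, hmin⟩ :
      ∃ n, 0 < n ∧ σ^[n] i = i ∧ ∀ k, k ≠ 0 → k < n → σ^[k] i ≠ i := by
    have hper : i ∈ Function.periodicPts σ := by
      refine ⟨orderOf σ, orderOf_pos σ, ?_⟩
      show σ^[orderOf σ] i = i
      simp [Equiv.Perm.iterate_eq_pow, pow_orderOf_eq_one]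
    exact ⟨Function.minimalPeriod σ i,
      Function.minimalPeriod_pos_of_mem_periodicPts hper,
      Function.iterate_minimalPeriod,
      fun k hk hlt => Function.not_isPeriodicPt_of_pos_of_lt_minimalPeriod hk hlt⟩
  have haux : ∀ a b : ℕ, 0 < a → a ≤ b → b ≤ n → σ^[a] i = σ^[b] i → a = b := by
    intro a b hapos hab hbn hEq
    have h3 : σ^[a] (σ^[b-a] i) = σ^[a] i := by
      rw [← Function.iterate_add_apply]
      rw [show a + (b - a) = b by omega]
      exact hEq.symm
    have h4 : σ^[b - a] i = i := (σ.injective.iterate a) h3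
    by_contra hne
    exact hmin (b - a) (by omega) (by omega) h4
  have hn1 : n ≠ 1 := by
    intro h
    apply hi
    have := hperiod
    rw [h] at this
    simpa using this
  have hn2 : n ≠ 2 := by
    intro h
    apply h2
    have := h ▸ hperiod
    rwa [show (2:ℕ) = 1 + 1 from rfl, Function.iterate_succ_apply,
      Function.iterate_one] at this
  have hn3 : 3 ≤ n := by omega
  have hx : σ (σ i) ≠ σ i := fun h => hi (σ.injective h)
  obtain ⟨w, hs, he⟩ := orbit_walk G σ hadj (σ i) hx (n - 1)
  have hend : σ^[n-1] (σ i) = i := by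
    have h5 : σ^[n-1+1] i = i := by rw [show n - 1 + 1 = n by omega, hperiod]
    calc σ^[n-1] (σ i) = σ^[n-1+1] i := (Function.iterate_succ_apply σ (n-1) i).symm
    _ = i := h5
  let q : G.Walk (σ i) i := w.copy rfl hend
  have hq_support : q.support = (List.range n).map (fun j => σ^[j+1] i) := by
    simp only [q, SimpleGraph.Walk.support_copy, hs]
    rw [show n - 1 + 1 = n by omega]
    exact List.map_congr_left fun j _ => (Function.iterate_succ_apply σ j i).symm
  have hq_edges : q.edges = (List.range (n-1)).map (fun j => s(σ^[j+1] i, σ^[j+2] i)) := by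
    simp only [q, SimpleGraph.Walk.edges_copy, he]
    refine List.map_congr_left fun j _ => ?_
    rw [(Function.iterate_succ_apply σ j i).symm, (Function.iterate_succ_apply σ (j+1) i).symm]
  have hiter_ne : ∀ a b : ℕ, 0 < a → a ≤ n → 0 < b → b ≤ n → a ≠ b → σ^[a] i ≠ σ^[b] i := by
    intro a b _ han _ hbn hab hEq
    rcases Nat.le_total a b with h | h
    · exact hab (haux a b (by omega) h hbn hEq)
    · exact hab (haux b a (by omega) h han hEq.symm).symm
  have hq_path : q.IsPath := by
    apply SimpleGraph.Walk.IsPath.mk'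
    rw [hq_support]
    apply List.Nodup.map_on _ List.nodup_range
    intro a ha b hb hEq
    simp only [List.mem_range] at ha hb
    by_contra hne
    exact hiter_ne (a+1) (b+1) (by omega) (by omega) (by omega) (by omega) (by omega) hEq
  have hedge_notin : s(i, σ i) ∉ q.edges := by
    rw [hq_edges]
    intro hmem
    obtain ⟨j, hj, hEq⟩ := List.mem_map.mp hmem
    simp only [List.mem_range] at hj
    rw [Sym2.eq_iff] at hEq
    rcases hEq with ⟨hA, hB⟩ | ⟨hA, hB⟩
    · exact hiter_ne (j+1) n (by omega) (by omega) (by omega) le_rfl (by omega)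
        (by rw [hA, hperiod])
    · rcases Nat.lt_or_ge (j+2) n with h | h
      · exact hiter_ne (j+2) n (by omega) (by omega) (by omega) le_rfl (by omega)
          (by rw [hB, hperiod])
      · have h1 : (1:ℕ) = j + 1 := haux 1 (j+1) (by omega) (by omega) (by omega)
          (by simpa using hA.symm)
        omega
  have hcyc : (SimpleGraph.Walk.cons (hadj i hi) q).IsCycle := by
    rw [SimpleGraph.Walk.cons_isCycle_iff]
    exact ⟨hq_path, hedge_notin⟩
  exact hG _ hcyc

/-- Lemma 5.4 (expansion by an edge): `d(Γ) = d(Γ_{PQ}) - d(Γ_{P,Q})`. -/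
theorem forest_det_edge_expansion {V : Type*} [Fintype V]
    (G : SimpleGraph V) (hG : G.IsAcyclic) (a : V → ℤ) (P Q : V)
    (hPQ : G.Adj P Q) :
    wDet G a = wDet (G.deleteEdges {s(P, Q)}) a - wDetDel G a {P, Q} := by
  have hne : P ≠ Q := hPQ.ne
  set A := wMatrix G a with hA
  set B := wMatrix (G.deleteEdges {s(P,Q)}) a with hB
  set C := wMatrix (SimpleGraph.comap
      (Subtype.val : {v // v ∉ ({P,Q} : Set V)} → V) G) (fun v => a v.1) with hC
  have hAeqB : ∀ x y : V, ¬(x = P ∧ y = Q) → ¬(x = Q ∧ y = P) → A x y = B x y := by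
    intro x y h1 h2
    simp only [hA, hB, wMatrix, Matrix.of_apply, SimpleGraph.deleteEdges_adj]
    by_cases hxy : x = y
    · simp [hxy]
    · have hs : s(x,y) ∉ ({s(P,Q)} : Set (Sym2 V)) := by
        simp only [Set.mem_singleton_iff, Sym2.eq_iff]
        tauto
      simp [hxy, hs]
  have hBPQ : B P Q = 0 := by
    simp [hB, wMatrix, hne, SimpleGraph.deleteEdges_adj]
  have hBQP : B Q P = 0 := by
    simp [hB, wMatrix, hne.symm, SimpleGraph.deleteEdges_adj, Sym2.eq_swap]
  have hAPQ : A P Q = -1 := by simp [hA, wMatrix, hne, hPQ]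
  have hAQP : A Q P = -1 := by simp [hA, wMatrix, hne.symm, hPQ.symm]
  have keyA : ∀ σ : Equiv.Perm V, (∏ i, A (σ i) i) ≠ 0 → ∀ v, σ (σ v) = v := by
    intro σ hσ
    refine key_invol G hG σ (fun v hv => ?_)
    have hfac := Finset.prod_ne_zero_iff.mp hσ v (Finset.mem_univ v)
    by_contra hnadj
    apply hfac
    have hna : ¬ G.Adj (σ v) v := fun h => hnadj h.symm
    simp [hA, wMatrix, hv, hna]
  -- Step 1
  have hsplit : A.det - B.det =
      ∑ σ ∈ Finset.univ.filter (fun σ : Equiv.Perm V => σ P = Q ∧ σ Q = P),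
        ((Equiv.Perm.sign σ : ℤˣ) : ℤ) * ∏ i, A (σ i) i := by
    rw [Matrix.det_apply', Matrix.det_apply']
    simp only [Int.cast_id]
    rw [← Finset.sum_sub_distrib,
      ← Finset.sum_filter_add_sum_filter_not Finset.univ
        (fun σ : Equiv.Perm V => σ P = Q ∧ σ Q = P)]
    have hz : ∀ σ ∈ Finset.univ.filter (fun σ : Equiv.Perm V => ¬(σ P = Q ∧ σ Q = P)),
        ((Equiv.Perm.sign σ : ℤˣ) : ℤ) * ∏ i, A (σ i) i -
          ((Equiv.Perm.sign σ : ℤˣ) : ℤ) * ∏ i, B (σ i) i = 0 := by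
      intro σ hσ'
      have hcond := (Finset.mem_filter.mp hσ').2
      by_cases c1 : σ P = Q
      · have c2 : σ Q ≠ P := fun h => hcond ⟨c1, h⟩
        have hBz : ∏ i, B (σ i) i = 0 :=
          Finset.prod_eq_zero (Finset.mem_univ P) (by rw [c1, hBQP])
        have hAz : ∏ i, A (σ i) i = 0 := by
          by_contra hA0
          exact c2 (by rw [← c1]; exact keyA σ hA0 P)
        simp [hAz, hBz]
      · by_cases c2 : σ Q = P
        · have hBz : ∏ i, B (σ i) i = 0 :=
            Finset.prod_eq_zero (Finset.mem_univ Q) (by rw [c2, hBPQ])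
          have hAz : ∏ i, A (σ i) i = 0 := by
            by_contra hA0
            exact c1 (by rw [← c2]; exact keyA σ hA0 Q)
          simp [hAz, hBz]
        · have hEq : ∀ i, A (σ i) i = B (σ i) i := by
            intro i
            apply hAeqB
            · rintro ⟨hx, hy⟩; exact c2 (by rw [← hy]; exact hx)
            · rintro ⟨hx, hy⟩; exact c1 (by rw [← hy]; exact hx)
          rw [show (∏ i, A (σ i) i) = ∏ i, B (σ i) i from
            Finset.prod_congr rfl fun i _ => hEq i, sub_self]
    rw [Finset.sum_eq_zero hz, add_zero]
    refine Finset.sum_congr rfl fun σ hσ => ?_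
    obtain ⟨h1, h2⟩ := (Finset.mem_filter.mp hσ).2
    have hBz : ∏ i, B (σ i) i = 0 :=
      Finset.prod_eq_zero (Finset.mem_univ Q) (by rw [h2, hBPQ])
    rw [hBz, mul_zero, sub_zero]
  -- membership facts
  have hPmem : ¬ (P ∉ ({P,Q} : Set V)) := by simp
  have hQmem : ¬ (Q ∉ ({P,Q} : Set V)) := by simp
  have hiff : ∀ (σ : Equiv.Perm V), σ P = Q → σ Q = P →
      ∀ v, (v ∉ ({P,Q} : Set V)) ↔ (σ v ∉ ({P,Q} : Set V)) := by
    intro σ h1 h2 v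
    have e1 : σ v = P ↔ v = Q := by rw [← h2, Equiv.apply_eq_iff_eq]
    have e2 : σ v = Q ↔ v = P := by rw [← h1, Equiv.apply_eq_iff_eq]
    simp only [Set.mem_insert_iff, Set.mem_singleton_iff, e1, e2]
    tauto
  have hEP : ∀ τ : Equiv.Perm {v // v ∉ ({P,Q} : Set V)},
      τ.extendDomain (Equiv.refl _) P = P := fun τ =>
    Equiv.Perm.extendDomain_apply_not_subtype _ _ hPmem
  have hEQ : ∀ τ : Equiv.Perm {v // v ∉ ({P,Q} : Set V)},
      τ.extendDomain (Equiv.refl _) Q = Q := fun τ =>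
    Equiv.Perm.extendDomain_apply_not_subtype _ _ hQmem
  have hEv : ∀ (τ : Equiv.Perm {v // v ∉ ({P,Q} : Set V)}) (v : V)
      (hv : v ∉ ({P,Q} : Set V)),
      τ.extendDomain (Equiv.refl _) v = (τ ⟨v, hv⟩ : V) := by
    intro τ v hv
    simpa using Equiv.Perm.extendDomain_apply_subtype τ (Equiv.refl _) hv
  have hnotmem : ∀ v : V, v ≠ P → v ≠ Q → v ∉ ({P,Q} : Set V) := by
    intro v h1 h2; simp [h1, h2]
  have hne_of_notmem : ∀ v : V, v ∉ ({P,Q} : Set V) → v ≠ P ∧ v ≠ Q := by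
    intro v hv; constructor <;> (rintro rfl; simp at hv)
  -- Step 2
  have hstep2 :
      (∑ σ ∈ Finset.univ.filter (fun σ : Equiv.Perm V => σ P = Q ∧ σ Q = P),
        ((Equiv.Perm.sign σ : ℤˣ) : ℤ) * ∏ i, A (σ i) i) = - C.det := by
    rw [Matrix.det_apply']
    simp only [Int.cast_id]
    rw [← Finset.sum_neg_distrib]
    refine Finset.sum_bij'
      (i := fun σ hσ => Equiv.Perm.subtypePerm σ
        (fun v => (hiff σ (Finset.mem_filter.mp hσ).2.1 (Finset.mem_filter.mp hσ).2.2 v).symm))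
      (j := fun τ _ => Equiv.swap P Q * τ.extendDomain (Equiv.refl _))
      (fun _ _ => Finset.mem_univ _) ?_ ?_ ?_ ?_
    · -- hj : lands in the filter
      intro τ _
      rw [Finset.mem_filter]
      refine ⟨Finset.mem_univ _, ?_, ?_⟩
      · rw [Equiv.Perm.mul_apply, hEP, Equiv.swap_apply_left]
      · rw [Equiv.Perm.mul_apply, hEQ, Equiv.swap_apply_right]
    · -- left_inv : j (i σ) = σ
      intro σ hσ
      obtain ⟨h1, h2⟩ := (Finset.mem_filter.mp hσ).2
      ext v
      by_cases hv1 : v = P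
      · subst hv1
        rw [Equiv.Perm.mul_apply, hEP, Equiv.swap_apply_left, h1]
      by_cases hv2 : v = Q
      · subst hv2
        rw [Equiv.Perm.mul_apply, hEQ, Equiv.swap_apply_right, h2]
      have hv : v ∉ ({P,Q} : Set V) := hnotmem v hv1 hv2
      have hσv : σ v ∉ ({P,Q} : Set V) := (hiff σ h1 h2 v).mp hv
      obtain ⟨hs1, hs2⟩ := hne_of_notmem _ hσv
      rw [Equiv.Perm.mul_apply, hEv _ v hv, Equiv.Perm.subtypePerm_apply,
        Equiv.swap_apply_of_ne_of_ne hs1 hs2]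
    · -- right_inv : i (j τ) = τ
      intro τ _
      ext v
      simp only [Equiv.Perm.subtypePerm_apply]
      obtain ⟨hs1, hs2⟩ := hne_of_notmem _ (τ v).2
      rw [Equiv.Perm.mul_apply]
      rw [show (Equiv.Perm.extendDomain τ (Equiv.refl _)) v.1 = (τ v : V) by
        rw [hEv τ v.1 v.2]]
      rw [Equiv.swap_apply_of_ne_of_ne hs1 hs2]
    · -- term equality
      intro σ hσ
      obtain ⟨h1, h2⟩ := (Finset.mem_filter.mp hσ).2
      set τ := Equiv.Perm.subtypePerm σ (p := fun v => v ∉ ({P,Q} : Set V))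
        (fun v => (hiff σ h1 h2 v).symm) with hτ
      -- sign
      have hfact : σ = Equiv.swap P Q * τ.extendDomain (Equiv.refl _) := by
        ext v
        by_cases hv1 : v = P
        · subst hv1
          rw [Equiv.Perm.mul_apply, hEP, Equiv.swap_apply_left, h1]
        by_cases hv2 : v = Q
        · subst hv2
          rw [Equiv.Perm.mul_apply, hEQ, Equiv.swap_apply_right, h2]
        have hv : v ∉ ({P,Q} : Set V) := hnotmem v hv1 hv2
        have hσv : σ v ∉ ({P,Q} : Set V) := (hiff σ h1 h2 v).mp hv
        obtain ⟨hs1, hs2⟩ := hne_of_notmem _ hσv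
        rw [Equiv.Perm.mul_apply, hEv _ v hv, Equiv.Perm.subtypePerm_apply,
          Equiv.swap_apply_of_ne_of_ne hs1 hs2]
      have hsign : ((Equiv.Perm.sign σ : ℤˣ) : ℤ) =
          -((Equiv.Perm.sign τ : ℤˣ) : ℤ) := by
        rw [hfact, Equiv.Perm.sign_mul, Equiv.Perm.sign_swap hne,
          Equiv.Perm.sign_extendDomain]
        simp
      -- product
      have hprod : (∏ i, A (σ i) i) = ∏ v, C (τ v) v := by
        rw [← Finset.prod_sdiff (Finset.subset_univ ({P,Q} : Finset V))]
        have hpair : (∏ i ∈ ({P,Q} : Finset V), A (σ i) i) = 1 := by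
          rw [Finset.prod_pair hne, h1, h2, hAQP, hAPQ]
          norm_num
        have hrest : (∏ i ∈ Finset.univ \ ({P,Q} : Finset V), A (σ i) i) =
            ∏ v : {v // v ∉ ({P,Q} : Set V)}, A (σ v.1) v.1 := by
          apply Finset.prod_subtype
          intro x
          simp [Finset.mem_sdiff]
        rw [hpair, mul_one, hrest]
        refine Finset.prod_congr rfl fun v _ => ?_
        rw [hτ, Equiv.Perm.subtypePerm_apply]
        simp [hA, hC, wMatrix, Subtype.ext_iff]
      rw [hsign, hprod]
      ring
  have hkey : A.det - B.det = -C.det := hsplit.trans hstep2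
  have h1 : wDet G a = A.det := rfl
  have h2 : wDet (G.deleteEdges {s(P,Q)}) a = B.det := rfl
  have h3 : wDetDel G a {P, Q} = C.det := by
    unfold wDetDel wDet
    rw [hC]
    congr!
  rw [h1, h2, h3]
  linarith [hkey]
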